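/- Let G be a graph on at least 3 vertices that is explainable with respect to the exactly-2-relation by a non-negative integer weighted tree with all pairwise leaf distances positive. Then G is complete if and only if G is 2-connected. -/

import Mathlib

open SimpleGraph

noncomputable def treePath {V : Type} (T : SimpleGraph V) (hT : T.IsTree) (x y : V) :
    T.Walk x y := (hT.existsUnique_path x y).choose

/-- The weighted distance between two vertices of a tree: the sum of the weights
`lam` over the edges of the unique path. -/
noncomputable def treeDist {V : Type} (T : SimpleGraph V) (hT : T.IsTree)
    (lam : Sym2 V → ℕ) (x y : V) : ℕ :=
  ((treePath T hT x y).edges.map lam).sum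

/-- A leaf of a tree: a vertex of degree at most one. -/
def IsLeaf {V : Type} (T : SimpleGraph V) (v : V) : Prop :=
  (T.neighborSet v).ncard ≤ 1

/-- `(T, lam)` explains the graph `G` w.r.t. the exactly-`k`-relation, where
`f` identifies the vertices of `G` with the leaves of `T`. -/
def ExplainedBy {α V : Type} (G : SimpleGraph α) (T : SimpleGraph V) (hT : T.IsTree)
    (lam : Sym2 V → ℕ) (f : α → V) (k : ℕ) : Prop :=
  Function.Injective f ∧ (∀ v : V, (∃ a, f a = v) ↔ IsLeaf T v) ∧
    (∀ x y : α, G.Adj x y ↔ treeDist T hT lam (f x) (f y) = k)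

/-- `G` can be explained w.r.t. the exactly-`k`-relation by some finite edge-weighted tree. -/
def Explainable {α : Type} (G : SimpleGraph α) (k : ℕ) : Prop :=
  ∃ (V : Type) (_ : Finite V) (T : SimpleGraph V) (hT : T.IsTree) (lam : Sym2 V → ℕ)
    (f : α → V), ExplainedBy G T hT lam f k

/-- `G` can be explained w.r.t. the exactly-`k`-relation by a tree in which all pairs of
distinct leaves are at positive weighted distance (discrete 0-relation). -/
def ExplainableDiscrete {α : Type} (G : SimpleGraph α) (k : ℕ) : Prop :=
  ∃ (V : Type) (_ : Finite V) (T : SimpleGraph V) (hT : T.IsTree) (lam : Sym2 V → ℕ)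
    (f : α → V), ExplainedBy G T hT lam f k ∧
      ∀ x y : α, x ≠ y → treeDist T hT lam (f x) (f y) ≠ 0

/-- A graph is 2-connected if it is connected, has at least 3 vertices, and stays
connected after removing any single vertex. -/
def TwoConnected {β : Type} (H : SimpleGraph β) : Prop :=
  H.Connected ∧ 3 ≤ Nat.card β ∧ ∀ v : β, (H.induce ({v}ᶜ : Set β)).Connected

/-- A block graph: every 2-connected induced subgraph (in particular every block)
is a clique. -/
def IsBlockGraph {β : Type} (H : SimpleGraph β) : Prop :=
  ∀ S : Set β, TwoConnected (H.induce S) →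
    ∀ x y : S, x ≠ y → (H.induce S).Adj x y

section TreeLemmas

variable {V : Type} (T : SimpleGraph V) (hT : T.IsTree) (lam : Sym2 V → ℕ)

lemma treePath_isPath (x y : V) : (treePath T hT x y).IsPath :=
  (hT.existsUnique_path x y).choose_spec.1

lemma treePath_unique {x y : V} (p : T.Walk x y) (hp : p.IsPath) : p = treePath T hT x y :=
  (hT.existsUnique_path x y).choose_spec.2 p hp

lemma treeDist_self (x : V) : treeDist T hT lam x x = 0 := by
  have h : (Walk.nil : T.Walk x x) = treePath T hT x x :=
    treePath_unique T hT _ Walk.IsPath.nil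
  rw [treeDist, ← h]
  simp

lemma treeDist_symm (x y : V) : treeDist T hT lam x y = treeDist T hT lam y x := by
  have h : (treePath T hT x y).reverse = treePath T hT y x :=
    treePath_unique T hT _ ((treePath_isPath T hT x y).reverse)
  rw [treeDist, treeDist, ← h, Walk.edges_reverse, List.map_reverse, List.sum_reverse]

lemma treeDist_append {x y z : V} (p : T.Walk x y) (q : T.Walk y z)
    (h : (p.append q).IsPath) :
    treeDist T hT lam x z = treeDist T hT lam x y + treeDist T hT lam y z := by
  have hp : p.IsPath := h.of_append_left
  have hq : q.IsPath := h.of_append_right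
  have heq : p.append q = treePath T hT x z := treePath_unique T hT _ h
  rw [treeDist, ← heq, Walk.edges_append, List.map_append, List.sum_append,
    treeDist, ← treePath_unique T hT p hp, treeDist, ← treePath_unique T hT q hq]

lemma treeDist_cons {x a z : V} (h : T.Adj x a) (q : T.Walk a z)
    (hq : (Walk.cons h q).IsPath) :
    treeDist T hT lam x z = lam s(x, a) + treeDist T hT lam a z := by
  have h1 : Walk.cons h q = treePath T hT x z := treePath_unique T hT _ hq
  have h2 : q = treePath T hT a z :=
    treePath_unique T hT _ ((Walk.cons_isPath_iff h q).mp hq).1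
  rw [treeDist, ← h1, Walk.edges_cons, List.map_cons, List.sum_cons, treeDist, ← h2]

lemma treeDist_median (y v u : V) :
    ∃ m, m ∈ (treePath T hT y v).support ∧
      treeDist T hT lam y v = treeDist T hT lam y m + treeDist T hT lam m v ∧
      treeDist T hT lam y u = treeDist T hT lam y m + treeDist T hT lam m u ∧
      treeDist T hT lam v u = treeDist T hT lam v m + treeDist T hT lam m u := by
  classical
  suffices H : ∀ (n : ℕ) (y v u : V), (treePath T hT y u).length = n →
      ∃ m, m ∈ (treePath T hT y v).support ∧
        treeDist T hT lam y v = treeDist T hT lam y m + treeDist T hT lam m v ∧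
        treeDist T hT lam y u = treeDist T hT lam y m + treeDist T hT lam m u ∧
        treeDist T hT lam v u = treeDist T hT lam v m + treeDist T hT lam m u by
    exact H _ y v u rfl
  intro n
  induction n using Nat.strong_induction_on with
  | _ n IH =>
  intro y v u hn
  by_cases huy : u = y
  · refine ⟨y, Walk.start_mem_support _, ?_, ?_, ?_⟩ <;> simp [huy, treeDist_self]
  by_cases hvy : v = y
  · refine ⟨y, Walk.start_mem_support _, ?_, ?_, ?_⟩ <;> simp [hvy, treeDist_self]
  obtain ⟨a, ha, q', hq⟩ := Walk.exists_eq_cons_of_ne (fun h => huy h.symm) (treePath T hT y u)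
  obtain ⟨b, hb, p', hpv⟩ := Walk.exists_eq_cons_of_ne (fun h => hvy h.symm) (treePath T hT y v)
  have hconsu : (Walk.cons ha q').IsPath := hq ▸ treePath_isPath T hT y u
  have hconsv : (Walk.cons hb p').IsPath := hpv ▸ treePath_isPath T hT y v
  have hq'path : q'.IsPath := ((Walk.cons_isPath_iff ha q').mp hconsu).1
  have hyq' : y ∉ q'.support := ((Walk.cons_isPath_iff ha q').mp hconsu).2
  have hp'path : p'.IsPath := ((Walk.cons_isPath_iff hb p').mp hconsv).1
  have hyp' : y ∉ p'.support := ((Walk.cons_isPath_iff hb p').mp hconsv).2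
  have q'eq : q' = treePath T hT a u := treePath_unique T hT _ hq'path
  have p'eq : p' = treePath T hT b v := treePath_unique T hT _ hp'path
  by_cases hab : a = b
  · subst hab
    have hlen : q'.length < n := by
      have : (Walk.cons ha q').length = n := by rw [← hq, hn]
      rw [Walk.length_cons] at this
      omega
    obtain ⟨m, hm, e1, e2, e3⟩ := IH q'.length hlen a v u (by rw [← q'eq])
    have hmp' : m ∈ p'.support := by rw [p'eq]; exact hm
    have Dyv : treeDist T hT lam y v = lam s(y, a) + treeDist T hT lam a v :=
      treeDist_cons T hT lam hb p' hconsv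
    have Dyu : treeDist T hT lam y u = lam s(y, a) + treeDist T hT lam a u :=
      treeDist_cons T hT lam ha q' hconsu
    have hmw : m ∈ (treePath T hT a v).support := hm
    have path2 : ((treePath T hT a v).takeUntil m hmw).IsPath :=
      (treePath_isPath T hT a v).takeUntil hmw
    have hynot : y ∉ ((treePath T hT a v).takeUntil m hmw).support := by
      intro hy
      exact hyp' (by rw [p'eq]; exact Walk.support_takeUntil_subset _ hmw hy)
    have hconsm : (Walk.cons ha ((treePath T hT a v).takeUntil m hmw)).IsPath :=
      (Walk.cons_isPath_iff _ _).mpr ⟨path2, hynot⟩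
    have Dym : treeDist T hT lam y m = lam s(y, a) + treeDist T hT lam a m :=
      treeDist_cons T hT lam ha _ hconsm
    refine ⟨m, ?_, by omega, by omega, e3⟩
    rw [hpv, Walk.support_cons]
    exact List.mem_cons_of_mem _ hmp'
  · -- paths diverge at y; median is y
    have hdisj : ∀ c, c ∈ (treePath T hT y v).support → c ∈ (treePath T hT y u).support →
        c = y := by
      intro c hcv hcu
      by_contra hcy
      have hcv' : c ∈ p'.support := by
        rw [hpv, Walk.support_cons] at hcv
        rcases List.mem_cons.mp hcv with h | h
        · exact absurd h hcy
        · exact h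
      have hcu' : c ∈ q'.support := by
        rw [hq, Walk.support_cons] at hcu
        rcases List.mem_cons.mp hcu with h | h
        · exact absurd h hcy
        · exact h
      have path1 : (Walk.cons ha (q'.takeUntil c hcu')).IsPath := by
        refine (Walk.cons_isPath_iff _ _).mpr ⟨hq'path.takeUntil hcu', fun hy => ?_⟩
        exact hyq' (Walk.support_takeUntil_subset _ hcu' hy)
      have path2 : (Walk.cons hb (p'.takeUntil c hcv')).IsPath := by
        refine (Walk.cons_isPath_iff _ _).mpr ⟨hp'path.takeUntil hcv', fun hy => ?_⟩
        exact hyp' (Walk.support_takeUntil_subset _ hcv' hy)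
      have heq : Walk.cons ha (q'.takeUntil c hcu') = Walk.cons hb (p'.takeUntil c hcv') :=
        (treePath_unique T hT _ path1).trans (treePath_unique T hT _ path2).symm
      have hsup := congrArg Walk.support heq
      rw [Walk.support_cons, Walk.support_cons, (q'.takeUntil c hcu').support_eq_cons,
        (p'.takeUntil c hcv').support_eq_cons] at hsup
      simp only [List.cons.injEq] at hsup
      exact hab hsup.2.1
    have happ : ((treePath T hT y v).reverse.append (treePath T hT y u)).IsPath := by
      rw [Walk.isPath_def, Walk.support_append, List.nodup_append]
      refine ⟨?_, ?_, ?_⟩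
      · rw [Walk.support_reverse]
        exact List.nodup_reverse.mpr ((Walk.isPath_def _).mp (treePath_isPath T hT y v))
      · exact ((treePath T hT y u).support.tail_sublist).nodup
          ((Walk.isPath_def _).mp (treePath_isPath T hT y u))
      · intro c hc1 d hc2 hcd
        subst hcd
        have hc1' : c ∈ (treePath T hT y v).support := by
          rwa [Walk.support_reverse, List.mem_reverse] at hc1
        have hc2' : c ∈ (treePath T hT y u).support := List.mem_of_mem_tail hc2
        have hcy : c = y := hdisj c hc1' hc2'
        subst hcy
        have h2 : (treePath T hT c u).support.Nodup :=
          (Walk.isPath_def _).mp (treePath_isPath T hT c u)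
        rw [(treePath T hT c u).support_eq_cons] at h2
        exact (List.nodup_cons.mp h2).1 hc2
    have Dvu : treeDist T hT lam v u = treeDist T hT lam v y + treeDist T hT lam y u :=
      treeDist_append T hT lam _ _ happ
    have hs : treeDist T hT lam v y = treeDist T hT lam y v := treeDist_symm T hT lam v y
    refine ⟨y, Walk.start_mem_support _, ?_, ?_, ?_⟩
    · rw [treeDist_self]; omega
    · rw [treeDist_self]; omega
    · exact Dvu

lemma treeDist_triangle (a b c : V) :
    treeDist T hT lam a c ≤ treeDist T hT lam a b + treeDist T hT lam b c := by
  obtain ⟨m, _, e1, e2, e3⟩ := treeDist_median T hT lam b a c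
  have s1 : treeDist T hT lam a b = treeDist T hT lam b a := treeDist_symm T hT lam a b
  have s2 : treeDist T hT lam a m = treeDist T hT lam m a := treeDist_symm T hT lam a m
  omega

lemma treeDist_parity (x y z : V) :
    Even (treeDist T hT lam x y + treeDist T hT lam y z + treeDist T hT lam x z) := by
  obtain ⟨m, _, e1, e2, e3⟩ := treeDist_median T hT lam x y z
  have s1 : treeDist T hT lam y m = treeDist T hT lam m y := treeDist_symm T hT lam y m
  exact ⟨treeDist T hT lam x m + treeDist T hT lam m y + treeDist T hT lam m z, by omega⟩

lemma treeDist_ordered {y v m1 m2 : V}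
    (h1 : m1 ∈ (treePath T hT y v).support) (h2 : m2 ∈ (treePath T hT y v).support) :
    treeDist T hT lam y m2 = treeDist T hT lam y m1 + treeDist T hT lam m1 m2 ∨
    treeDist T hT lam y m1 = treeDist T hT lam y m2 + treeDist T hT lam m2 m1 := by
  classical
  have hp : (treePath T hT y v).IsPath := treePath_isPath T hT y v
  have hspec := (treePath T hT y v).take_spec h1
  rcases (Walk.mem_support_append_iff _ _).1 (by rw [hspec]; exact h2) with hm | hm
  · right
    have hq1 : ((treePath T hT y v).takeUntil m1 h1).IsPath := hp.takeUntil h1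
    exact treeDist_append T hT lam (((treePath T hT y v).takeUntil m1 h1).takeUntil m2 hm)
      (((treePath T hT y v).takeUntil m1 h1).dropUntil m2 hm)
      (by rw [Walk.take_spec]; exact hq1)
  · left
    have hiso : (((treePath T hT y v).takeUntil m1 h1).append
        (((treePath T hT y v).dropUntil m1 h1).takeUntil m2 hm)).IsPath := by
      apply Walk.IsPath.of_append_left
        (q := ((treePath T hT y v).dropUntil m1 h1).dropUntil m2 hm)
      rw [← Walk.append_assoc, Walk.take_spec, hspec]
      exact hp
    exact treeDist_append T hT lam _ _ hiso

lemma treeDist_trans {Y U C W : V}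
    (h1 : treeDist T hT lam U C < treeDist T hT lam U Y + treeDist T hT lam C Y)
    (h2 : treeDist T hT lam C W < treeDist T hT lam C Y + treeDist T hT lam W Y) :
    treeDist T hT lam U W < treeDist T hT lam U Y + treeDist T hT lam W Y := by
  obtain ⟨m1, hm1, a1, a2, a3⟩ := treeDist_median T hT lam Y C U
  obtain ⟨m2, hm2, b1, b2, b3⟩ := treeDist_median T hT lam Y C W
  have s1 : treeDist T hT lam U C = treeDist T hT lam C U := treeDist_symm T hT lam U C
  have s2 : treeDist T hT lam U Y = treeDist T hT lam Y U := treeDist_symm T hT lam U Y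
  have s3 : treeDist T hT lam C Y = treeDist T hT lam Y C := treeDist_symm T hT lam C Y
  have s4 : treeDist T hT lam C m1 = treeDist T hT lam m1 C := treeDist_symm T hT lam C m1
  have s5 : treeDist T hT lam W Y = treeDist T hT lam Y W := treeDist_symm T hT lam W Y
  have s6 : treeDist T hT lam C m2 = treeDist T hT lam m2 C := treeDist_symm T hT lam C m2
  have s7 : treeDist T hT lam U m1 = treeDist T hT lam m1 U := treeDist_symm T hT lam U m1
  have s8 : treeDist T hT lam m1 m2 = treeDist T hT lam m2 m1 := treeDist_symm T hT lam m1 m2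
  have t1pos : 0 < treeDist T hT lam Y m1 := by omega
  have t2pos : 0 < treeDist T hT lam Y m2 := by omega
  have tri1 : treeDist T hT lam U W ≤ treeDist T hT lam U m1 + treeDist T hT lam m1 W :=
    treeDist_triangle T hT lam U m1 W
  have tri2 : treeDist T hT lam m1 W ≤ treeDist T hT lam m1 m2 + treeDist T hT lam m2 W :=
    treeDist_triangle T hT lam m1 m2 W
  rcases treeDist_ordered T hT lam hm1 hm2 with h | h <;> omega

end TreeLemmas


lemma walk_P3 {α : Type} {G : SimpleGraph α} {a b : α} (w : G.Walk a b) :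
    a ≠ b → ¬ G.Adj a b →
    ∃ x y z, G.Adj x y ∧ G.Adj y z ∧ ¬ G.Adj x z ∧ x ≠ z := by
  induction w with
  | nil => exact fun h _ => absurd rfl h
  | @cons a c b h w' ih =>
    intro hne hnadj
    by_cases hcb : c = b
    · exact absurd (hcb ▸ h) hnadj
    · by_cases hadj : G.Adj c b
      · exact ⟨a, c, b, h, hadj, hnadj, hne⟩
      · exact ih hcb hadj


/-- A graph on at least 3 vertices which is explainable w.r.t. the exactly-2-relation
with all pairwise leaf distances positive is complete iff it is 2-connected. -/
theorem stmt16 {α : Type} [Fintype α] (G : SimpleGraph α)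
    (hcard : 3 ≤ Fintype.card α) (hG : ExplainableDiscrete G 2) :
    (∀ x y : α, x ≠ y → G.Adj x y) ↔ TwoConnected G := by
  constructor
  · intro hcomp
    have hne : Nonempty α := Fintype.card_pos_iff.mp (by omega)
    refine ⟨?_, ?_, ?_⟩
    · haveI := hne
      exact ⟨fun u v => by
        by_cases h : u = v
        · exact h ▸ Reachable.refl u
        · exact (hcomp u v h).reachable⟩
    · rw [Nat.card_eq_fintype_card]; exact hcard
    · intro v
      obtain ⟨u, hu⟩ := Fintype.exists_ne_of_one_lt_card (by omega) v
      have hu' : u ∈ ({v}ᶜ : Set α) := Set.mem_compl_singleton_iff.mpr hu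
      haveI : Nonempty ↥({v}ᶜ : Set α) := ⟨⟨u, hu'⟩⟩
      exact ⟨fun c d => by
        by_cases h : c = d
        · exact h ▸ Reachable.refl c
        · refine Adj.reachable ?_
          have hcd : (c : α) ≠ (d : α) := fun hh => h (Subtype.ext hh)
          exact hcomp (c : α) (d : α) hcd⟩
  · rintro ⟨hconn, -, hdel⟩
    by_contra hnc
    push_neg at hnc
    obtain ⟨a, b, hab, hnadj⟩ := hnc
    obtain ⟨w⟩ := hconn.preconnected a b
    obtain ⟨x, y, z, hxy, hyz, hxz, hxzne⟩ := walk_P3 w hab hnadj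
    obtain ⟨V, hVfin, T, hT, lam, f, ⟨hinj, hleaf, hadj⟩, hdisc⟩ := hG
    have dxy : treeDist T hT lam (f x) (f y) = 2 := (hadj x y).1 hxy
    have dyz : treeDist T hT lam (f y) (f z) = 2 := (hadj y z).1 hyz
    have step : ∀ c d : α, G.Adj c d →
        Even (treeDist T hT lam (f c) (f y)) → Even (treeDist T hT lam (f d) (f y)) := by
      intro c d hcd hc
      have h2 : treeDist T hT lam (f c) (f d) = 2 := (hadj c d).1 hcd
      obtain ⟨k, hk⟩ := treeDist_parity T hT lam (f c) (f d) (f y)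
      obtain ⟨j, hj⟩ := hc
      have hs : treeDist T hT lam (f d) (f y) = treeDist T hT lam (f y) (f d) :=
        treeDist_symm T hT lam _ _
      have hs2 : treeDist T hT lam (f c) (f y) = treeDist T hT lam (f c) (f y) := rfl
      exact ⟨k - 1 - j, by omega⟩
    have hwalk : ∀ (c d : α) (w : G.Walk c d),
        Even (treeDist T hT lam (f c) (f y)) → Even (treeDist T hT lam (f d) (f y)) := by
      intro c d w
      induction w with
      | nil => exact id
      | cons h w' ih => exact fun hc => ih (step _ _ h hc)
    have heven : ∀ u : α, Even (treeDist T hT lam (f u) (f y)) := by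
      intro u
      obtain ⟨w'⟩ := hconn.preconnected y u
      exact hwalk y u w' (by rw [treeDist_self]; exact Even.zero)
    have dge : ∀ u : α, u ≠ y → 2 ≤ treeDist T hT lam (f u) (f y) := by
      intro u hu
      have h0 : treeDist T hT lam (f u) (f y) ≠ 0 := hdisc u y hu
      obtain ⟨k, hk⟩ := heven u
      omega
    have dxz4 : 4 ≤ treeDist T hT lam (f x) (f z) := by
      obtain ⟨k, hk⟩ := treeDist_parity T hT lam (f x) (f y) (f z)
      have h0 : treeDist T hT lam (f x) (f z) ≠ 0 := hdisc x z hxzne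
      have h2 : treeDist T hT lam (f x) (f z) ≠ 2 := fun h => hxz ((hadj x z).2 h)
      omega
    have hxmem : x ∈ ({y}ᶜ : Set α) := Set.mem_compl_singleton_iff.mpr hxy.ne
    have hzmem : z ∈ ({y}ᶜ : Set α) := Set.mem_compl_singleton_iff.mpr hyz.ne'
    have key : ∀ (c d : ↥({y}ᶜ : Set α)) (w : (G.induce ({y}ᶜ : Set α)).Walk c d),
        treeDist T hT lam (f ↑c) (f ↑d) <
          treeDist T hT lam (f ↑c) (f y) + treeDist T hT lam (f ↑d) (f y) := by
      intro c d w
      induction w with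
      | nil =>
        rename_i u
        have h1 : (↑u : α) ≠ y := Set.mem_compl_singleton_iff.mp u.2
        have h2 := dge _ h1
        rw [treeDist_self]
        omega
      | @cons c' e' d' h w' ih =>
        have hadj' : G.Adj ↑c' ↑e' := h
        have h2 : treeDist T hT lam (f ↑c') (f ↑e') = 2 := (hadj _ _).1 hadj'
        have hc' := dge _ (Set.mem_compl_singleton_iff.mp c'.2)
        have he' := dge _ (Set.mem_compl_singleton_iff.mp e'.2)
        exact treeDist_trans T hT lam (by omega) ih
    obtain ⟨w'⟩ := (hdel y).preconnected ⟨x, hxmem⟩ ⟨z, hzmem⟩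
    have hk : treeDist T hT lam (f x) (f z) <
        treeDist T hT lam (f x) (f y) + treeDist T hT lam (f z) (f y) := key _ _ w'
    have hzy : treeDist T hT lam (f z) (f y) = 2 := by
      rw [treeDist_symm]; exact dyz
    omega
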